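/- The matrix A_0^{anti} arising from anti-symmetric numerical boundary conditions admits the decomposition A_0^{anti} = S + B, where S is symmetric and B is nonzero only in its first and last rows and columns; in particular rank(A_0^{anti} − (A_0^{anti})^T) ≤ 4. -/

import Mathlib

open Matrix

/-- Grünwald–Letnikov coefficients: g 0 = 1, g (k+1) = -((α - k)/(k+1)) * g k. -/
noncomputable def glCoeff (α : ℝ) : ℕ → ℝ
  | 0 => 1
  | k + 1 => -((α - k) / (k + 1)) * glCoeff α k

/-- The flip (anti-identity) matrix J of size N+1. -/
def flipM (N : ℕ) : Matrix (Fin (N + 1)) (Fin (N + 1)) ℝ :=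
  Matrix.of fun j k => if (j : ℕ) + (k : ℕ) = N then 1 else 0

/-- Lower Hessenberg Toeplitz part T_L. -/
noncomputable def TLm (α : ℝ) (N : ℕ) : Matrix (Fin (N + 1)) (Fin (N + 1)) ℝ :=
  Matrix.of fun j k =>
    if (-1 : ℤ) ≤ (j : ℤ) - (k : ℤ) then glCoeff α ((j : ℤ) - (k : ℤ) + 1).toNat else 0

/-- Hankel part H̃_L (first column zero). -/
noncomputable def HLm (α : ℝ) (N : ℕ) : Matrix (Fin (N + 1)) (Fin (N + 1)) ℝ :=
  Matrix.of fun j k => if (k : ℕ) = 0 then 0 else glCoeff α ((j : ℕ) + (k : ℕ) + 1)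

/-- Rank-one correction R̃_L with the single entry g_0 in position (N, N-1). -/
noncomputable def RLm (α : ℝ) (N : ℕ) : Matrix (Fin (N + 1)) (Fin (N + 1)) ℝ :=
  Matrix.of fun j k => if (j : ℕ) = N ∧ (k : ℕ) = N - 1 then glCoeff α 0 else 0

/-- A_L^{anti} = T_L − H̃_L − R̃_L. -/
noncomputable def ALanti (α : ℝ) (N : ℕ) : Matrix (Fin (N + 1)) (Fin (N + 1)) ℝ :=
  TLm α N - HLm α N - RLm α N

/-- A_R^{anti} = T_R − H̃_R − R̃_R with T_R = T_Lᵀ, H̃_R = J H̃_L J, R̃_R = J R̃_L J. -/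
noncomputable def ARanti (α : ℝ) (N : ℕ) : Matrix (Fin (N + 1)) (Fin (N + 1)) ℝ :=
  (TLm α N)ᵀ - flipM N * HLm α N * flipM N - flipM N * RLm α N * flipM N

/-- A_0^{anti} = (A_L^{anti} + A_R^{anti})/2. -/
noncomputable def A0anti (α : ℝ) (N : ℕ) : Matrix (Fin (N + 1)) (Fin (N + 1)) ℝ :=
  (1 / 2 : ℝ) • (ALanti α N + ARanti α N)

section AuxLemmas

variable {N : ℕ}

lemma flipM_apply (j k : Fin (N + 1)) :
    flipM N j k = if k = j.rev then 1 else 0 := by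
  have hj := j.is_lt; have hk := k.is_lt
  have h : ((j : ℕ) + (k : ℕ) = N) ↔ k = j.rev := by
    rw [Fin.ext_iff, Fin.val_rev]; omega
  simp only [flipM, of_apply, h]

lemma flipM_apply' (j k : Fin (N + 1)) :
    flipM N j k = if j = k.rev then 1 else 0 := by
  have hj := j.is_lt; have hk := k.is_lt
  have h : ((j : ℕ) + (k : ℕ) = N) ↔ j = k.rev := by
    rw [Fin.ext_iff, Fin.val_rev]; omega
  simp only [flipM, of_apply, h]

lemma flip_mul (M : Matrix (Fin (N + 1)) (Fin (N + 1)) ℝ) :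
    flipM N * M = M.submatrix Fin.rev id := by
  ext j k
  simp [Matrix.mul_apply, flipM_apply, ite_mul]

lemma mul_flip (M : Matrix (Fin (N + 1)) (Fin (N + 1)) ℝ) :
    M * flipM N = M.submatrix id Fin.rev := by
  ext j k
  simp [Matrix.mul_apply, flipM_apply', mul_ite]

lemma flip_conj (M : Matrix (Fin (N + 1)) (Fin (N + 1)) ℝ) :
    flipM N * M * flipM N = M.submatrix Fin.rev Fin.rev := by
  rw [flip_mul, mul_flip, submatrix_submatrix]
  rfl

lemma A0anti_interior (α : ℝ) (j k : Fin (N + 1))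
    (hj1 : 1 ≤ (j : ℕ)) (hj2 : (j : ℕ) ≤ N - 1)
    (hk1 : 1 ≤ (k : ℕ)) (hk2 : (k : ℕ) ≤ N - 1) :
    A0anti α N j k = A0anti α N k j := by
  have hj := j.is_lt; have hk := k.is_lt
  have hN : 2 ≤ N := by omega
  have hjrev : (j.rev : ℕ) = N - (j : ℕ) := by rw [Fin.val_rev]; omega
  have hkrev : (k.rev : ℕ) = N - (k : ℕ) := by rw [Fin.val_rev]; omega
  have hHL : ∀ a b : Fin (N + 1), (b : ℕ) ≠ 0 →
      HLm α N a b = glCoeff α ((a : ℕ) + (b : ℕ) + 1) := by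
    intro a b hb; simp only [HLm, of_apply]; exact if_neg hb
  have hRL : ∀ a b : Fin (N + 1), (a : ℕ) ≠ N → RLm α N a b = 0 := by
    intro a b ha; simp [RLm, ha]
  simp only [A0anti, ALanti, ARanti, flip_conj, Matrix.smul_apply, Matrix.add_apply,
    Matrix.sub_apply, Matrix.transpose_apply, Matrix.submatrix_apply]
  rw [hHL j k (by omega), hHL k j (by omega), hHL j.rev k.rev (by omega),
    hHL k.rev j.rev (by omega), hRL j k (by omega), hRL k j (by omega),
    hRL j.rev k.rev (by omega), hRL k.rev j.rev (by omega)]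
  have e1 : (j : ℕ) + (k : ℕ) + 1 = (k : ℕ) + (j : ℕ) + 1 := by omega
  have e2 : (j.rev : ℕ) + (k.rev : ℕ) + 1 = (k.rev : ℕ) + (j.rev : ℕ) + 1 := by omega
  rw [e1, e2]
  ring

lemma rank_vecMulVec_le (u v : Fin (N + 1) → ℝ) : (vecMulVec u v).rank ≤ 1 := by
  rw [vecMulVec_eq Unit]
  exact (Matrix.rank_mul_le_left _ _).trans
    ((Matrix.rank_le_card_width _).trans (by simp))

lemma matrix_rank_add_le (A B : Matrix (Fin (N + 1)) (Fin (N + 1)) ℝ) :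
    (A + B).rank ≤ A.rank + B.rank := by
  classical
  rw [Matrix.rank, Matrix.mulVecLin_add]
  have hle : LinearMap.range (A.mulVecLin + B.mulVecLin) ≤
      LinearMap.range A.mulVecLin ⊔ LinearMap.range B.mulVecLin := by
    rintro x ⟨y, rfl⟩
    exact Submodule.add_mem_sup ⟨y, rfl⟩ ⟨y, rfl⟩
  exact (Submodule.finrank_mono hle).trans
    (Submodule.finrank_add_le_finrank_add_finrank _ _)

lemma rank_le_four_of_border (M : Matrix (Fin (N + 1)) (Fin (N + 1)) ℝ)
    (h : ∀ j k : Fin (N + 1), j ≠ 0 → j ≠ Fin.last N → k ≠ 0 → k ≠ Fin.last N → M j k = 0) :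
    M.rank ≤ 4 := by
  classical
  set n : Fin (N + 1) := Fin.last N with hn
  set u0 : Fin (N + 1) → ℝ := fun j => if j = 0 then 1 else 0 with hu0
  set uN : Fin (N + 1) → ℝ := fun j => if j = n ∧ j ≠ 0 then 1 else 0 with huN
  set w0 : Fin (N + 1) → ℝ := fun k => if k = 0 then 1 else 0 with hw0
  set wN : Fin (N + 1) → ℝ := fun k => if k = n ∧ k ≠ 0 then 1 else 0 with hwN
  set c : Fin (N + 1) → ℝ := fun j => M j 0 - u0 j * M 0 0 - uN j * M n 0 with hc
  set cN : Fin (N + 1) → ℝ := fun j => M j n - u0 j * M 0 n - uN j * M n n with hcN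
  have hdecomp : M = vecMulVec u0 (M 0) + vecMulVec uN (M n) +
      vecMulVec c w0 + vecMulVec cN wN := by
    ext j k
    simp only [Matrix.add_apply, vecMulVec_apply, hu0, huN, hw0, hwN, hc, hcN]
    by_cases hj0 : j = 0 <;> by_cases hjn : j = n <;>
      by_cases hk0 : k = 0 <;> by_cases hkn : k = n <;>
      simp only [hj0, hjn, hk0, hkn, if_pos, if_neg, ite_true, ite_false, ne_eq,
        not_true_eq_false, not_false_eq_true, and_true, and_false, true_and, false_and,
        if_true, if_false] <;>
      first
        | (subst hj0; subst hk0; simp <;> ring)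
        | simp_all <;> ring
  calc M.rank = (vecMulVec u0 (M 0) + vecMulVec uN (M n) +
      vecMulVec c w0 + vecMulVec cN wN).rank := by rw [← hdecomp]
    _ ≤ (vecMulVec u0 (M 0) + vecMulVec uN (M n) + vecMulVec c w0).rank +
        (vecMulVec cN wN).rank := matrix_rank_add_le _ _
    _ ≤ ((vecMulVec u0 (M 0) + vecMulVec uN (M n)).rank + (vecMulVec c w0).rank) +
        (vecMulVec cN wN).rank := by
          gcongr
          exact matrix_rank_add_le _ _
    _ ≤ (((vecMulVec u0 (M 0)).rank + (vecMulVec uN (M n)).rank) + (vecMulVec c w0).rank) +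
        (vecMulVec cN wN).rank := by
          gcongr
          exact matrix_rank_add_le _ _
    _ ≤ ((1 + 1) + 1) + 1 := by
          gcongr <;> exact _root_.rank_vecMulVec_le _ _
    _ = 4 := rfl

end AuxLemmas

theorem A0anti_decomposition (α : ℝ) (hα1 : 1 < α) (hα2 : α < 2) (N : ℕ) :
    (∃ S B : Matrix (Fin (N + 1)) (Fin (N + 1)) ℝ,
      Sᵀ = S ∧
      (∀ j k : Fin (N + 1),
        1 ≤ (j : ℕ) → (j : ℕ) ≤ N - 1 → 1 ≤ (k : ℕ) → (k : ℕ) ≤ N - 1 → B j k = 0) ∧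
      A0anti α N = S + B) ∧
    (A0anti α N - (A0anti α N)ᵀ).rank ≤ 4 := by
  set A := A0anti α N with hA
  constructor
  · refine ⟨(1 / 2 : ℝ) • (A + Aᵀ), (1 / 2 : ℝ) • (A - Aᵀ), ?_, ?_, ?_⟩
    · rw [transpose_smul, transpose_add, transpose_transpose, add_comm Aᵀ A]
    · intro j k hj1 hj2 hk1 hk2
      have h := A0anti_interior α j k hj1 hj2 hk1 hk2
      simp only [Matrix.smul_apply, Matrix.sub_apply, Matrix.transpose_apply, hA]
      rw [h, sub_self, smul_zero]
    · ext j k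
      simp only [Matrix.add_apply, Matrix.smul_apply, Matrix.sub_apply,
        Matrix.transpose_apply, smul_eq_mul]
      ring
  · apply rank_le_four_of_border
    intro j k hj0 hjn hk0 hkn
    have hj := j.is_lt; have hk := k.is_lt
    have hj0' : (j : ℕ) ≠ 0 := fun h => hj0 (Fin.ext (by simp [h]))
    have hk0' : (k : ℕ) ≠ 0 := fun h => hk0 (Fin.ext (by simp [h]))
    have hjn' : (j : ℕ) ≠ N := fun h => hjn (Fin.ext (by simp [h, Fin.val_last]))
    have hkn' : (k : ℕ) ≠ N := fun h => hkn (Fin.ext (by simp [h, Fin.val_last]))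
    have h := A0anti_interior α j k (by omega) (by omega) (by omega) (by omega)
    simp only [Matrix.sub_apply, Matrix.transpose_apply, hA]
    rw [h, sub_self]
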